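/- Let β₀ be the 1-periodic step function with β₀(t) = 1 for t ∈ [0, 1/2) and β₀(t) = −1 for t ∈ [1/2, 1), and for s ∈ ℝ let R_sβ₀ denote the function u ↦ β₀(u + s). Let k ∈ ℕ, let 0 = t₀ < t₁ < ⋯ < t_k < 1/2 and ξ₀, …, ξ_k ∈ ℝ, and set γ = Σ_{j=0}^{k} ξ_j · R_{t_j}β₀. Then γ has bounded variation on [0,1] and the total variation of γ over [0,1] equals 4·Σ_{j=0}^{k} |ξ_j|. -/

import Mathlib

/-- The 1-periodic step function equal to `1` on `[0, 1/2) + ℤ` and `-1` on `[1/2, 1) + ℤ`. -/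
noncomputable def stepLoop : ℝ → ℝ := fun t => if Int.fract t < 1/2 then 1 else -1

lemma stepLoop_eq (s u : ℝ) (hs0 : 0 ≤ s) (hs : s < 1/2) (hu0 : 0 ≤ u) (hu1 : u ≤ 1) :
    stepLoop (u + s) = if u < 1/2 - s then 1 else if u < 1 - s then -1 else 1 := by
  unfold stepLoop
  by_cases h1 : u + s < 1
  · rw [Int.fract_eq_self.2 ⟨by linarith, h1⟩]
    by_cases h2 : u + s < 1/2
    · rw [if_pos h2, if_pos (by linarith)]
    · rw [if_neg h2, if_neg (by push_neg at h2 ⊢; linarith), if_pos (by linarith)]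
  · have h2 : Int.fract (u + s) = u + s - 1 := by
      rw [Int.fract_eq_iff]
      push_neg at h1
      exact ⟨by linarith, by linarith, 1, by push_cast; ring⟩
    push_neg at h1
    rw [h2, if_pos (by linarith), if_neg (by linarith), if_neg (by linarith)]

lemma evar_jump (f : ℝ → ℝ) (a b : ℝ) (hab : a < b)
    (hconst : ∀ u ∈ Set.Ico a b, f u = f a) :
    eVariationOn f (Set.Icc a b) = edist (f b) (f a) := by
  apply le_antisymm
  · rw [eVariationOn]
    apply iSup_le
    rintro ⟨n, u, hu, hus⟩
    dsimp only
    induction n with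
    | zero => simp
    | succ n ih =>
      rw [Finset.sum_range_succ]
      by_cases h : u n < b
      · have hz : ∑ i ∈ Finset.range n, edist (f (u (i + 1))) (f (u i)) = 0 := by
          refine Finset.sum_eq_zero fun i hi => ?_
          have hi' : i + 1 ≤ n := Finset.mem_range.1 hi
          have h1 : u (i + 1) < b := lt_of_le_of_lt (hu hi') h
          have h2 : u i < b := lt_of_le_of_lt (hu (Nat.le_succ i)) h1
          rw [hconst _ ⟨(hus (i+1)).1, h1⟩, hconst _ ⟨(hus i).1, h2⟩, edist_self]
        rw [hz, zero_add, hconst _ ⟨(hus n).1, h⟩]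
        rcases lt_or_eq_of_le (hus (n+1)).2 with h' | h'
        · rw [hconst _ ⟨(hus (n+1)).1, h'⟩, edist_self]; exact zero_le
        · rw [h']
      · have hb : u n = b := le_antisymm (hus n).2 (not_lt.1 h)
        have hb' : u (n+1) = b := le_antisymm (hus (n+1)).2 (hb ▸ hu (Nat.le_succ n))
        rw [hb, hb', edist_self, add_zero]
        exact ih
  · exact eVariationOn.edist_le f ⟨le_of_lt hab, le_refl b⟩ ⟨le_refl a, le_of_lt hab⟩

lemma evar_chain (f : ℝ → ℝ) (p : ℕ → ℝ) :
    ∀ n : ℕ, (∀ i < n, p i ≤ p (i+1)) →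
    eVariationOn f (Set.Icc (p 0) (p n)) =
      ∑ i ∈ Finset.range n, eVariationOn f (Set.Icc (p i) (p (i+1))) := by
  intro n
  induction n with
  | zero => intro _; simp [Set.Icc_self, eVariationOn.subsingleton f Set.subsingleton_singleton]
  | succ n ih =>
    intro hp
    have hmono : ∀ a b : ℕ, a ≤ b → b ≤ n + 1 → p a ≤ p b := by
      intro a b hab hbn
      induction b with
      | zero => simp only [Nat.le_zero] at hab; simp [hab]
      | succ b ihb =>
        rcases Nat.lt_or_ge a (b+1) with h | h
        · exact le_trans (ihb (Nat.lt_succ_iff.1 h) (by omega)) (hp b (by omega))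
        · have : a = b + 1 := by omega
          simp [this]
    rw [Finset.sum_range_succ, ← ih (fun i hi => hp i (by omega))]
    have := eVariationOn.Icc_add_Icc (s := (Set.univ : Set ℝ)) f
      (hmono 0 n (Nat.zero_le n) (Nat.le_succ n)) (hp n (Nat.lt_succ_self n)) (Set.mem_univ (p n))
    simpa using this.symm

theorem stmt17 (k : ℕ) (t ξ : ℕ → ℝ) (ht0 : t 0 = 0)
    (hmono : ∀ i < k, t i < t (i + 1)) (hlt : ∀ i ≤ k, t i < 1/2)
    (γ : ℝ → ℝ)
    (hγ : γ = fun u => ∑ j ∈ Finset.range (k + 1), ξ j * stepLoop (u + t j)) :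
    BoundedVariationOn γ (Set.Icc 0 1) ∧
    eVariationOn γ (Set.Icc 0 1) =
      ENNReal.ofReal (4 * ∑ j ∈ Finset.range (k + 1), |ξ j|) := by
  subst hγ
  have tmono : ∀ a b : ℕ, a < b → b ≤ k → t a < t b := by
    intro a b hab hbk
    induction b with
    | zero => omega
    | succ b ihb =>
      rcases Nat.lt_or_ge a b with h | h
      · exact lt_trans (ihb h (by omega)) (hmono b (by omega))
      · have : a = b := by omega
        subst this; exact hmono a (by omega)
  have tnn : ∀ j ≤ k, 0 ≤ t j := by
    intro j hj
    rcases Nat.eq_zero_or_pos j with h | h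
    · simp [h, ht0]
    · exact le_of_lt (ht0 ▸ tmono 0 j h hj)
  have tiff : ∀ a b : ℕ, a ≤ k → b ≤ k → (t a < t b ↔ a < b) := by
    intro a b ha hb
    constructor
    · intro h
      by_contra hc
      push_neg at hc
      rcases lt_or_eq_of_le hc with h' | h'
      · exact absurd (tmono b a h' ha) (by linarith)
      · subst h'; linarith
    · intro h; exact tmono a b h hb
  set p : ℕ → ℝ := fun i => if i = 0 then 0 else if i ≤ k+1 then 1/2 - t (k+1-i) else 1 - t (2*k+2-i) with hp
  have hp0 : p 0 = 0 := by simp [hp]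
  have hpe1 : ∀ i : ℕ, 1 ≤ i → i ≤ k+1 → p i = 1/2 - t (k+1-i) := by
    intro i h1 h2
    simp only [hp]
    rw [if_neg (by omega), if_pos h2]
  have hpe2 : ∀ i : ℕ, k+2 ≤ i → p i = 1 - t (2*k+2-i) := by
    intro i h1
    simp only [hp]
    rw [if_neg (by omega), if_neg (by omega)]
  have hplast : p (2*k+2) = 1 := by
    rw [hpe2 (2*k+2) (by omega)]
    have h : 2*k+2-(2*k+2) = 0 := by omega
    rw [h, ht0]; ring
  have hps : ∀ i < 2*k+2, p i < p (i+1) := by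
    intro i hi
    rcases Nat.eq_zero_or_pos i with h0 | h0
    · subst h0
      rw [hp0, hpe1 1 le_rfl (by omega)]
      have h : k+1-1 = k := by omega
      rw [h]
      linarith [hlt k le_rfl]
    · rcases Nat.lt_or_ge i (k+1) with h1 | h1
      · rw [hpe1 i (by omega) (by omega), hpe1 (i+1) (by omega) (by omega)]
        have := tmono (k+1-(i+1)) (k+1-i) (by omega) (by omega)
        linarith
      · rcases Nat.eq_or_lt_of_le h1 with h2 | h2
        · rw [hpe1 i (by omega) (by omega), hpe2 (i+1) (by omega)]
          have e1 : k+1-i = 0 := by omega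
          have e2 : 2*k+2-(i+1) = k := by omega
          rw [e1, e2, ht0]
          linarith [hlt k le_rfl]
        · rw [hpe2 i (by omega), hpe2 (i+1) (by omega)]
          have := tmono (2*k+2-(i+1)) (2*k+2-i) (by omega) (by omega)
          linarith
  have hple : ∀ a b : ℕ, a ≤ b → b ≤ 2*k+2 → p a ≤ p b := by
    intro a b hab hbk
    induction b with
    | zero => simp only [Nat.le_zero] at hab; simp [hab]
    | succ b ihb =>
      rcases Nat.lt_or_ge a (b+1) with h | h
      · exact le_trans (ihb (by omega) (by omega)) (le_of_lt (hps b (by omega)))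
      · have : a = b + 1 := by omega
        simp [this]
  have hpbreak1 : ∀ j ≤ k, 1/2 - t j = p (k+1-j) := by
    intro j hj
    rw [hpe1 (k+1-j) (by omega) (by omega)]
    have h : k+1-(k+1-j) = j := by omega
    rw [h]
  have hpbreak2 : ∀ j ≤ k, 1 - t j = p (2*k+2-j) := by
    intro j hj
    rw [hpe2 (2*k+2-j) (by omega)]
    have h : 2*k+2-(2*k+2-j) = j := by omega
    rw [h]
  have hp01 : ∀ i ≤ 2*k+2, 0 ≤ p i ∧ p i ≤ 1 := by
    intro i hi
    constructor
    · rw [← hp0]; exact hple 0 i (Nat.zero_le i) hi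
    · rw [← hplast]; exact hple i (2*k+2) hi le_rfl
  have hstep : ∀ j ≤ k, ∀ u : ℝ, 0 ≤ u → u ≤ 1 →
      stepLoop (u + t j) = if u < 1/2 - t j then 1 else if u < 1 - t j then -1 else 1 :=
    fun j hj u hu0 hu1 => stepLoop_eq (t j) u (tnn j hj) (hlt j hj) hu0 hu1
  -- constancy on each Ico
  have hconst : ∀ i < 2*k+2, ∀ u ∈ Set.Ico (p i) (p (i+1)),
      (∑ j ∈ Finset.range (k + 1), ξ j * stepLoop (u + t j)) =
      ∑ j ∈ Finset.range (k + 1), ξ j * stepLoop (p i + t j) := by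
    intro i hi u hu
    have hcrit : ∀ m ≤ 2*k+2, (u < p m ↔ p i < p m) := by
      intro m hm
      rcases le_or_gt m i with h | h
      · have h' : p m ≤ p i := hple m i h (by omega)
        constructor
        · intro h''; linarith [hu.1]
        · intro h''; linarith
      · have h' : p (i+1) ≤ p m := hple (i+1) m h hm
        constructor
        · intro _; exact lt_of_lt_of_le (hps i hi) h'
        · intro _; exact lt_of_lt_of_le hu.2 h'
    have hu0 : 0 ≤ u := le_trans (hp01 i (by omega)).1 hu.1
    have hu1 : u ≤ 1 := le_trans (le_of_lt hu.2) (hp01 (i+1) (by omega)).2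
    refine Finset.sum_congr rfl fun j hj => ?_
    have hjk : j ≤ k := by have := Finset.mem_range.1 hj; omega
    rw [hstep j hjk u hu0 hu1, hstep j hjk (p i) (hp01 i (by omega)).1 (hp01 i (by omega)).2,
      hpbreak1 j hjk, hpbreak2 j hjk,
      if_congr (hcrit (k+1-j) (by omega)) rfl (if_congr (hcrit (2*k+2-j) (by omega)) rfl rfl)]
  -- value coefficients
  set e : ℕ → ℕ → ℝ := fun j i => if i ≤ k+1 then (if j+i < k+1 then 1 else -1)
      else (if j+i < 2*k+2 then -1 else 1) with he
  have he1 : ∀ j i : ℕ, i ≤ k+1 → e j i = if j+i < k+1 then 1 else -1 := by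
    intro j i h; simp only [he]; rw [if_pos h]
  have he2 : ∀ j i : ℕ, j ≤ k → k+1 ≤ i → e j i = if j+i < 2*k+2 then -1 else 1 := by
    intro j i hj h
    rcases Nat.eq_or_lt_of_le h with h' | h'
    · simp only [he]
      rw [if_pos (by omega), if_neg (by omega), if_pos (by omega)]
    · simp only [he]
      rw [if_neg (by omega)]
  have hval : ∀ i ≤ 2*k+2, (∑ j ∈ Finset.range (k + 1), ξ j * stepLoop (p i + t j)) =
      ∑ j ∈ Finset.range (k + 1), ξ j * e j i := by
    intro i hi
    refine Finset.sum_congr rfl fun j hj => ?_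
    have hjk : j ≤ k := by have := Finset.mem_range.1 hj; omega
    rw [hstep j hjk (p i) (hp01 i hi).1 (hp01 i hi).2]
    congr 1
    rcases Nat.eq_zero_or_pos i with h0 | h0
    · subst h0
      rw [hp0, if_pos (show (0:ℝ) < 1/2 - t j by linarith [hlt j hjk]),
        he1 j 0 (by omega), if_pos (by omega)]
    · rcases le_or_gt i (k+1) with h1 | h1
      · rw [hpe1 i (by omega) h1]
        by_cases hc : j + i < k+1
        · have ht' : t j < t (k+1-i) := (tiff j (k+1-i) hjk (by omega)).2 (by omega)
          rw [if_pos (by linarith), he1 j i h1, if_pos hc]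
        · have hnc : ¬ (1/2 - t (k+1-i) < 1/2 - t j) := by
            intro h
            have h' : t j < t (k+1-i) := by linarith
            exact hc (by have := (tiff j (k+1-i) hjk (by omega)).1 h'; omega)
          rw [if_neg hnc,
            if_pos (show 1/2 - t (k+1-i) < 1 - t j by
              linarith [tnn (k+1-i) (by omega : k+1-i ≤ k), hlt j hjk]),
            he1 j i h1, if_neg hc]
      · rw [hpe2 i (by omega)]
        have hm : 2*k+2-i ≤ k := by omega
        have hfst : ¬ (1 - t (2*k+2-i) < 1/2 - t j) := by
          push_neg
          linarith [hlt _ hm, tnn j hjk]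
        rw [if_neg hfst]
        by_cases hc : j + i < 2*k+2
        · have ht' : t j < t (2*k+2-i) := (tiff j (2*k+2-i) hjk hm).2 (by omega)
          rw [if_pos (by linarith), he2 j i hjk (by omega), if_pos hc]
        · have hnc : ¬ (1 - t (2*k+2-i) < 1 - t j) := by
            intro h
            have h' : t j < t (2*k+2-i) := by linarith
            exact hc (by have := (tiff j (2*k+2-i) hjk hm).1 h'; omega)
          rw [if_neg hnc, he2 j i hjk (by omega), if_neg hc]
  -- jump sizes
  have hdiff : ∀ i < 2*k+2,
      edist ((fun u => ∑ j ∈ Finset.range (k + 1), ξ j * stepLoop (u + t j)) (p (i+1)))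
            ((fun u => ∑ j ∈ Finset.range (k + 1), ξ j * stepLoop (u + t j)) (p i)) =
      ENNReal.ofReal (2 * |ξ (if i ≤ k then k - i else 2*k+1-i)|) := by
    intro i hi
    dsimp only
    rw [hval (i+1) (by omega), hval i (by omega), edist_dist, Real.dist_eq, ← Finset.sum_sub_distrib]
    have hterm : ∀ j, ξ j * e j (i+1) - ξ j * e j i = ξ j * (e j (i+1) - e j i) :=
      fun j => by ring
    simp only [hterm]
    rcases le_or_gt i k with h1 | h1
    · rw [if_pos h1]
      have hsum : ∑ j ∈ Finset.range (k+1), ξ j * (e j (i+1) - e j i) = ξ (k-i) * (-2) := by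
        rw [Finset.sum_eq_single (k-i)]
        · congr 1
          rw [he1 _ (i+1) (by omega), he1 _ i (by omega),
            if_neg (by omega), if_pos (by omega)]
          norm_num
        · intro j hj hne
          have hjk : j ≤ k := by have := Finset.mem_range.1 hj; omega
          have hz : e j (i+1) - e j i = 0 := by
            rw [he1 j (i+1) (by omega), he1 j i (by omega)]
            rcases Nat.lt_or_ge (j+i) k with h | h
            · rw [if_pos (by omega), if_pos (by omega)]; ring
            · rw [if_neg (by omega), if_neg (by omega)]; ring
          rw [hz, mul_zero]
        · intro h; exact absurd (Finset.mem_range.2 (by omega)) h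
      rw [hsum]
      congr 1
      rw [abs_mul]
      norm_num
      ring
    · rw [if_neg (by omega)]
      have hsum : ∑ j ∈ Finset.range (k+1), ξ j * (e j (i+1) - e j i) = ξ (2*k+1-i) * 2 := by
        rw [Finset.sum_eq_single (2*k+1-i)]
        · congr 1
          rw [he2 _ (i+1) (by omega) (by omega), he2 _ i (by omega) (by omega),
            if_neg (by omega), if_pos (by omega)]
          norm_num
        · intro j hj hne
          have hjk : j ≤ k := by have := Finset.mem_range.1 hj; omega
          have hz : e j (i+1) - e j i = 0 := by
            rw [he2 j (i+1) hjk (by omega), he2 j i hjk (by omega)]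
            rcases Nat.lt_or_ge (j+i) (2*k+1) with h | h
            · rw [if_pos (by omega), if_pos (by omega)]; ring
            · rw [if_neg (by omega), if_neg (by omega)]; ring
          rw [hz, mul_zero]
        · intro h; exact absurd (Finset.mem_range.2 (by omega)) h
      rw [hsum]
      congr 1
      rw [abs_mul]
      norm_num
      ring
  -- main computation
  have key : eVariationOn (fun u => ∑ j ∈ Finset.range (k + 1), ξ j * stepLoop (u + t j))
      (Set.Icc 0 1) = ENNReal.ofReal (4 * ∑ j ∈ Finset.range (k + 1), |ξ j|) := by
    have h01 : (Set.Icc (0:ℝ) 1) = Set.Icc (p 0) (p (2*k+2)) := by rw [hp0, hplast]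
    rw [h01, evar_chain _ p (2*k+2) (fun i hi => le_of_lt (hps i hi))]
    have hterm : ∀ i ∈ Finset.range (2*k+2),
        eVariationOn (fun u => ∑ j ∈ Finset.range (k + 1), ξ j * stepLoop (u + t j))
          (Set.Icc (p i) (p (i+1))) =
        ENNReal.ofReal (2 * |ξ (if i ≤ k then k - i else 2*k+1-i)|) := by
      intro i hi
      have hi' := Finset.mem_range.1 hi
      rw [evar_jump _ _ _ (hps i hi') (fun u hu => hconst i hi' u hu), hdiff i hi']
    rw [Finset.sum_congr rfl hterm]
    have h2 : 2*k+2 = (k+1) + (k+1) := by omega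
    rw [h2, Finset.range_eq_Ico,
      ← Finset.sum_Ico_consecutive _ (Nat.zero_le (k+1)) (by omega : k+1 ≤ (k+1)+(k+1)),
      Finset.sum_Ico_eq_sum_range, Finset.sum_Ico_eq_sum_range]
    simp only [Nat.sub_zero, Nat.zero_add, Nat.add_sub_cancel_left]
    have hA : ∀ i ∈ Finset.range (k+1),
        ENNReal.ofReal (2 * |ξ (if i ≤ k then k - i else 2*k+1-i)|) =
        ENNReal.ofReal (2 * |ξ (k - i)|) := by
      intro i hi
      rw [if_pos (by have := Finset.mem_range.1 hi; omega)]
    have hB : ∀ i ∈ Finset.range (k+1),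
        ENNReal.ofReal (2 * |ξ (if k+1+i ≤ k then k - (k+1+i) else 2*k+1-(k+1+i))|) =
        ENNReal.ofReal (2 * |ξ (k - i)|) := by
      intro i hi
      rw [if_neg (by omega)]
      have h' : 2*k+1-(k+1+i) = k - i := by omega
      rw [h']
    rw [Finset.sum_congr rfl hA, Finset.sum_congr rfl hB]
    have hrefl : ∑ i ∈ Finset.range (k+1), ENNReal.ofReal (2 * |ξ (k - i)|) =
        ∑ j ∈ Finset.range (k+1), ENNReal.ofReal (2 * |ξ j|) := by
      have := Finset.sum_range_reflect (fun j => ENNReal.ofReal (2 * |ξ j|)) (k+1)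
      simpa using this
    rw [hrefl, ← Finset.sum_add_distrib]
    have hcomb : ∀ j ∈ Finset.range (k+1),
        ENNReal.ofReal (2 * |ξ j|) + ENNReal.ofReal (2 * |ξ j|) =
        ENNReal.ofReal (4 * |ξ j|) := by
      intro j _
      rw [← ENNReal.ofReal_add (by positivity) (by positivity)]
      congr 1
      ring
    rw [Finset.sum_congr rfl hcomb,
      ← ENNReal.ofReal_sum_of_nonneg (fun j _ => by positivity), ← Finset.mul_sum]
  exact ⟨by
    show eVariationOn _ (Set.Icc (0:ℝ) 1) ≠ ⊤
    rw [key]; exact ENNReal.ofReal_ne_top, key⟩
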